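/- Let c > 0, g > 0, ε ∈ {−1, 1}, and let b be a constant with c/2 < b < φ₀^+. Let I be an open interval containing 0 and let φ : I → ℝ be differentiable with φ(0) = b such that for every ξ ∈ I: c/2 < φ(ξ) < φ₀^+, φ(ξ)² + m₁φ(ξ) + m₂ > 0, 2√(φ(ξ)² + m₁φ(ξ) + m₂) + 2φ(ξ) + m₁ > 0, 2√(a₂)·√(φ(ξ)² + m₁φ(ξ) + m₂) + b₂φ(ξ) + m₃ > 0, and φ′(ξ) = ε·(φ(ξ) − φ₀^+)·√(φ(ξ)² + m₁φ(ξ) + m₂)/(2φ(ξ)). Then β₂(φ(ξ)) = β₂(b)·exp(εξ/2) for all ξ ∈ I. (The case ε = −1 is the kink-like wave solution φ₃ of equation (3.9), and ε = 1 is the antikink-like wave solution φ₄ of equation (3.10).) -/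

import Mathlib

theorem osmosis_K22_kink_like_c_pos_g_pos_plus
    (c g : ℝ) (hc : 0 < c) (hg : 0 < g)
    (ε : ℝ) (hε : ε = -1 ∨ ε = 1)
    (s φ0p m1 m2 m3 a2 b2 α2 : ℝ)
    (hs : s = Real.sqrt (c ^ 2 + 4 * g))
    (hφ0p : φ0p = (c + s) / 2)
    (hm1 : m1 = -(c - 3 * s) / 3)
    (hm2 : m2 = (c ^ 2 + 6 * g + c * s) / 6)
    (hm3 : m3 = (2 / 3) * (c ^ 2 + 6 * g + c * s))
    (ha2 : a2 = c ^ 2 + 4 * g + c * s)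
    (hb2 : b2 = (2 * c + 6 * s) / 3)
    (hα2 : α2 = (c + s) / (2 * Real.sqrt a2))
    (β₂ : ℝ → ℝ)
    (hβ₂ : ∀ x : ℝ, β₂ x =
      (2 * Real.sqrt (x ^ 2 + m1 * x + m2) + 2 * x + m1) * (φ0p - x) ^ α2 /
        (2 * Real.sqrt a2 * Real.sqrt (x ^ 2 + m1 * x + m2) + b2 * x + m3) ^ α2)
    (b : ℝ) (hb : c / 2 < b ∧ b < φ0p)
    (I : Set ℝ) (hI : IsOpen I) (hIconv : Convex ℝ I) (h0I : (0:ℝ) ∈ I)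
    (φ : ℝ → ℝ) (hφ0 : φ 0 = b)
    (hrange : ∀ ξ ∈ I, c / 2 < φ ξ ∧ φ ξ < φ0p)
    (hq : ∀ ξ ∈ I, 0 < (φ ξ) ^ 2 + m1 * φ ξ + m2)
    (hnum : ∀ ξ ∈ I, 0 < 2 * Real.sqrt ((φ ξ) ^ 2 + m1 * φ ξ + m2) + 2 * φ ξ + m1)
    (hden : ∀ ξ ∈ I,
      0 < 2 * Real.sqrt a2 * Real.sqrt ((φ ξ) ^ 2 + m1 * φ ξ + m2) + b2 * φ ξ + m3)
    (horb : ∀ ξ ∈ I, HasDerivAt φ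
      (ε * (φ ξ - φ0p) * Real.sqrt ((φ ξ) ^ 2 + m1 * φ ξ + m2) / (2 * φ ξ)) ξ) :
    ∀ ξ ∈ I, β₂ (φ ξ) = β₂ b * Real.exp (ε * ξ / 2) := by
  have hcg : (0:ℝ) < c ^ 2 + 4 * g := by positivity
  have hs0 : 0 < s := by rw [hs]; exact Real.sqrt_pos.2 hcg
  have hs2 : s ^ 2 = c ^ 2 + 4 * g := by rw [hs]; exact Real.sq_sqrt hcg.le
  have ha2pos : 0 < a2 := by rw [ha2]; positivity
  set A := Real.sqrt a2 with hA
  have hApos : 0 < A := Real.sqrt_pos.2 ha2pos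
  have hA2 : A ^ 2 = c ^ 2 + 4 * g + c * s := by rw [hA, Real.sq_sqrt ha2pos.le, ha2]
  -- the logarithmic potential
  set L : ℝ → ℝ := fun t =>
    Real.log (2 * Real.sqrt ((φ t) ^ 2 + m1 * φ t + m2) + 2 * φ t + m1)
      + α2 * Real.log (φ0p - φ t)
      - α2 * Real.log (2 * A * Real.sqrt ((φ t) ^ 2 + m1 * φ t + m2) + b2 * φ t + m3)
      - ε * t / 2 with hL
  have key : ∀ ξ ∈ I, HasDerivAt L 0 ξ := by
    intro ξ hξ
    obtain ⟨hr1, hr2⟩ := hrange ξ hξ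
    have hx0 : 0 < φ ξ := lt_trans (by linarith) hr1
    have hqpos := hq ξ hξ
    have hQpos : 0 < Real.sqrt ((φ ξ) ^ 2 + m1 * φ ξ + m2) := Real.sqrt_pos.2 hqpos
    set x := φ ξ with hxdef
    set Q := Real.sqrt (x ^ 2 + m1 * x + m2) with hQ
    have hQ2 : Q ^ 2 = x ^ 2 + m1 * x + m2 := Real.sq_sqrt hqpos.le
    have hNpos := hnum ξ hξ
    have hDpos := hden ξ hξ
    have hsub : 0 < φ0p - x := by linarith
    have hφd := horb ξ hξ
    have hqd : HasDerivAt (fun t => (φ t) ^ 2 + m1 * φ t + m2)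
        ((2:ℕ) * x ^ 1 * (ε * (x - φ0p) * Q / (2 * x)) + m1 * (ε * (x - φ0p) * Q / (2 * x))) ξ :=
      ((hφd.pow 2).add (hφd.const_mul m1)).add_const m2
    have hsd := hqd.sqrt (ne_of_gt hqpos)
    have hNd := ((hsd.const_mul 2).add (hφd.const_mul 2)).add_const m1
    have hlogN := hNd.log (ne_of_gt hNpos)
    have hsubd : HasDerivAt (fun t => φ0p - φ t) (0 - ε * (x - φ0p) * Q / (2 * x)) ξ :=
      (hasDerivAt_const ξ φ0p).sub hφd
    have hlog2 := hsubd.log (ne_of_gt hsub)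
    have hDd := ((hsd.const_mul (2 * A)).add (hφd.const_mul b2)).add_const m3
    have hlogD := hDd.log (ne_of_gt hDpos)
    have hlin : HasDerivAt (fun t : ℝ => ε * t / 2) (ε / 2) ξ := by
      simpa using ((hasDerivAt_id ξ).const_mul ε).div_const 2
    have hLd := ((hlogN.add (hlog2.const_mul α2)).sub (hlogD.const_mul α2)).sub hlin
    have hxne : x ≠ 0 := ne_of_gt hx0
    have hQne : Q ≠ 0 := ne_of_gt hQpos
    have hAne : A ≠ 0 := ne_of_gt hApos
    have hNne : (2 * Q + 2 * x + m1) ≠ 0 := ne_of_gt hNpos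
    have hDne : (2 * A * Q + b2 * x + m3) ≠ 0 := ne_of_gt hDpos
    have hsubne : φ0p - x ≠ 0 := ne_of_gt hsub
    have hα2A : α2 * A = φ0p := by
      rw [hα2, hφ0p]; field_simp
    have h1 : Q * (2 * A * Q + b2 * x + m3) - (x - φ0p) * (A * (2 * x + m1) + b2 * Q)
        = A * (2 * A * Q + b2 * x + m3) := by
      subst hm1 hm2 hm3 hb2 hφ0p ha2
      linear_combination (2 * A) * hQ2 - (2 * Q) * hA2 + (A / 2 + Q) * hs2
    clear_value Q
    clear_value x
    refine hLd.congr_deriv (Eq.symm ?_)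
    simp only [Pi.add_apply]
    rw [← hxdef, ← hQ]
    rw [eq_comm]
    push_cast
    trans (ε / (2 * x * (2 * A * Q + b2 * x + m3)) *
        ((x - φ0p) * (2 * A * Q + b2 * x + m3)
          + α2 * (Q * (2 * A * Q + b2 * x + m3) - (x - φ0p) * (A * (2 * x + m1) + b2 * Q)))
        - ε / 2)
    · have hN' : 2 * (Q + x) + m1 ≠ 0 := by rw [show 2 * (Q + x) + m1 = 2 * Q + 2 * x + m1 by ring]; exact hNne
      have hD' : 2 * Q * A + x * b2 + m3 ≠ 0 := by rw [show 2 * Q * A + x * b2 + m3 = 2 * A * Q + b2 * x + m3 by ring]; exact hDne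
      field_simp
      ring
    · rw [h1]
      have h2 : (x - φ0p) * (2 * A * Q + b2 * x + m3) + α2 * (A * (2 * A * Q + b2 * x + m3))
          = x * (2 * A * Q + b2 * x + m3) := by
        linear_combination (2 * A * Q + b2 * x + m3) * hα2A
      rw [h2]
      field_simp [hxne, hDne]
      rw [div_self (by rw [mul_comm x b2]; exact hDne)]
      ring
  -- L is constant on I
  have hconst : ∀ ξ ∈ I, L ξ = L 0 := by
    intro ξ hξ
    have hb := Convex.norm_image_sub_le_of_norm_hasDerivWithin_le
      (f' := fun _ => (0:ℝ)) (C := 0)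
      (fun t ht => (key t ht).hasDerivWithinAt) (fun t ht => by simp) hIconv h0I hξ
    have : ‖L ξ - L 0‖ ≤ 0 := by simpa using hb
    have := norm_nonneg (L ξ - L 0)
    have h0 : ‖L ξ - L 0‖ = 0 := le_antisymm ‹‖L ξ - L 0‖ ≤ 0› this
    have := norm_eq_zero.mp h0
    linarith [sub_eq_zero.mp this]
  -- express β₂ (φ ξ) via L
  have hval : ∀ ξ ∈ I, β₂ (φ ξ) = Real.exp (L ξ + ε * ξ / 2) := by
    intro ξ hξ
    obtain ⟨hr1, hr2⟩ := hrange ξ hξ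
    have hsub : 0 < φ0p - φ ξ := by linarith
    have hNpos := hnum ξ hξ
    have hDpos := hden ξ hξ
    rw [hβ₂]
    rw [Real.rpow_def_of_pos hsub, Real.rpow_def_of_pos hDpos]
    have hLval : L ξ + ε * ξ / 2
        = Real.log (2 * Real.sqrt ((φ ξ) ^ 2 + m1 * φ ξ + m2) + 2 * φ ξ + m1)
          + Real.log (φ0p - φ ξ) * α2
          - Real.log (2 * A * Real.sqrt ((φ ξ) ^ 2 + m1 * φ ξ + m2) + b2 * φ ξ + m3) * α2 := by
      simp only [hL]; ring
    rw [hLval, Real.exp_sub, Real.exp_add, Real.exp_log hNpos]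
  -- conclude
  intro ξ hξ
  have h0' := hval 0 h0I
  rw [hφ0] at h0'
  simp at h0'
  rw [hval ξ hξ, hconst ξ hξ, h0', ← Real.exp_add]
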